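/- In the setting of the previous compatibility (Yetter–Drinfeld-type condition with the anti-involution P playing the role of the antipode), the subspace W of coinvariants of M is a Lie algebra representation of the Lie algebra g⁻ = {u primitive in H : P(u) = -u} via u · ξ = u ⋆ ξ: that is, for u, v ∈ g⁻ and ξ ∈ W, one has u ⋆ ξ ∈ W and (uv - vu) ⋆ ξ = u ⋆ (v ⋆ ξ) - v ⋆ (u ⋆ ξ). -/
import Mathlib


/-!
STATEMENT 5: In the Yetter–Drinfeld-type setting (module-comodule `M` over a bialgebra `H`
with anti-involution `P` playing the role of the antipode, satisfying
`ρ(u ⋆ ξ) = Δ²(u) ⋆_P ρ(ξ)`), the space `W` of coinvariants of `M` is a representation of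
the Lie algebra `g⁻` of primitive elements `u` with `P u = -u`: for such `u, v` and
coinvariant `ξ`, `u ⋆ ξ` is coinvariant and
`(uv - vu) ⋆ ξ = u ⋆ (v ⋆ ξ) - v ⋆ (u ⋆ ξ)`.
-/

open scoped TensorProduct

theorem coinvariants_are_representation_of_antiInvariant_primitives
    {k H M : Type*} [Field k] [Ring H] [Bialgebra k H]
    [AddCommGroup M] [Module k M]
    (P : H →ₗ[k] H)
    (hPmul : ∀ x y : H, P (x * y) = P y * P x)
    (hPone : P 1 = 1)
    (hPcomul : ∀ x : H,
      Coalgebra.comul (R := k) (P x) = TensorProduct.map P P (Coalgebra.comul (R := k) x))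
    (hPinv : ∀ x : H, P (P x) = x)
    (act : H →ₗ[k] M →ₗ[k] M)
    (hact_mul : ∀ (a b : H) (m : M), act (a * b) m = act a (act b m))
    (hact_one : ∀ m : M, act 1 m = m)
    (ρ : M →ₗ[k] H ⊗[k] M)
    (sP : ((H ⊗[k] H) ⊗[k] H) →ₗ[k] (H ⊗[k] M) →ₗ[k] (H ⊗[k] M))
    (hsP : ∀ (u₁ u₂ u₃ v : H) (m : M),
      sP ((u₁ ⊗ₜ[k] u₂) ⊗ₜ[k] u₃) (v ⊗ₜ[k] m) = (u₁ * v * P u₂) ⊗ₜ[k] act u₃ m)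
    (hcompat : ∀ (u : H) (ξ : M),
      ρ (act u ξ) =
        sP ((LinearMap.rTensor H (Coalgebra.comul (R := k)) ∘ₗ Coalgebra.comul (R := k)) u)
          (ρ ξ)) :
    ∀ (u v : H) (ξ : M),
      Coalgebra.comul (R := k) u = u ⊗ₜ[k] (1 : H) + (1 : H) ⊗ₜ[k] u → P u = -u →
      Coalgebra.comul (R := k) v = v ⊗ₜ[k] (1 : H) + (1 : H) ⊗ₜ[k] v → P v = -v →
      ρ ξ = (1 : H) ⊗ₜ[k] ξ →
      ρ (act u ξ) = (1 : H) ⊗ₜ[k] act u ξ ∧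
      act (u * v - v * u) ξ = act u (act v ξ) - act v (act u ξ) := by
  intro u v ξ hu hPu hv hPv hξ
  constructor
  · rw [hcompat u ξ, hξ]
    have h2 : (LinearMap.rTensor H (Coalgebra.comul (R := k)) ∘ₗ Coalgebra.comul (R := k)) u
        = (u ⊗ₜ[k] (1:H)) ⊗ₜ[k] (1:H) + ((1:H) ⊗ₜ[k] u) ⊗ₜ[k] (1:H)
          + ((1:H) ⊗ₜ[k] (1:H)) ⊗ₜ[k] u := by
      simp [hu, TensorProduct.add_tmul, Bialgebra.comul_one (R := k) (A := H), Algebra.TensorProduct.one_def]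
    rw [h2, map_add, map_add, LinearMap.add_apply, LinearMap.add_apply,
      hsP, hsP, hsP, hPu, hPone, hact_one]
    simp only [mul_one, one_mul]
    rw [TensorProduct.neg_tmul]
    abel
  · rw [map_sub, LinearMap.sub_apply, hact_mul, hact_mul]
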